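/- Let P be a polynomial over ℂ of degree at least 2. Let K(P) = {z ∈ ℂ : the sequence n ↦ ‖P^[n](z)‖ is bounded} be the filled Julia set of P. If K(P) is not connected, then there exists z ∈ ℂ with P′(z) = 0 and z ∉ K(P), i.e. a critical point of P whose forward orbit is unbounded (hence lies in the basin of attraction to ∞). -/

import Mathlib

open Polynomial Set Metric Filter Bornology



/-- Directed intersection of compact connected sets is connected. -/
lemma iInter_conn {ι : Type*} [Nonempty ι] (F : ι → Set ℂ)
    (hdir : Directed (· ⊇ ·) F)
    (hcpt : ∀ i, IsCompact (F i)) (hconn : ∀ i, IsConnected (F i)) :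
    IsConnected (⋂ i, F i) := by
  have hne : (⋂ i, F i).Nonempty :=
    IsCompact.nonempty_iInter_of_directed_nonempty_isCompact_isClosed F hdir
      (fun i => (hconn i).nonempty) hcpt (fun i => (hcpt i).isClosed)
  refine ⟨hne, ?_⟩
  intro u v hu hv hcov ⟨x, hxT, hxu⟩ ⟨y, hyT, hyv⟩
  by_contra hempty
  rw [Set.not_nonempty_iff_eq_empty] at hempty
  set T := ⋂ i, F i with hT
  have hTcl : IsClosed T := isClosed_iInter fun i => (hcpt i).isClosed
  have hTcpt : IsCompact T := (hcpt (Classical.arbitrary ι)).of_isClosed_subset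
    hTcl (Set.iInter_subset _ _)
  have hA : IsCompact (T \ v) := hTcpt.of_isClosed_subset
    (hTcl.sdiff hv) diff_subset
  have hB : IsCompact (T \ u) := hTcpt.of_isClosed_subset
    (hTcl.sdiff hu) diff_subset
  have hdisj : Disjoint (T \ v) (T \ u) := by
    rw [Set.disjoint_left]
    rintro z ⟨hzT, hzv⟩ ⟨_, hzu⟩
    rcases hcov hzT with h | h
    exacts [hzu h, hzv h]
  obtain ⟨u', v', hu', hv', hAu', hBv', huv'⟩ :=
    SeparatedNhds.of_isCompact_isCompact hA hB hdisj
  -- some F i is contained in u' ∪ v'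
  have hFi : ∃ i, F i ⊆ u' ∪ v' := by
    by_contra hnot
    push_neg at hnot
    have h1 : (⋂ i, F i \ (u' ∪ v')).Nonempty := by
      apply IsCompact.nonempty_iInter_of_directed_nonempty_isCompact_isClosed
      · intro i j
        obtain ⟨k, hk1, hk2⟩ := hdir i j
        exact ⟨k, diff_subset_diff_left hk1, diff_subset_diff_left hk2⟩
      · intro i
        obtain ⟨z, hz1, hz2⟩ := Set.not_subset.mp (hnot i)
        exact ⟨z, hz1, hz2⟩
      · exact fun i => (hcpt i).of_isClosed_subset
          ((hcpt i).isClosed.sdiff (hu'.union hv')) diff_subset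
      · exact fun i => (hcpt i).isClosed.sdiff (hu'.union hv')
    obtain ⟨z, hz⟩ := h1
    simp only [Set.mem_iInter, Set.mem_diff] at hz
    have hzT : z ∈ T := Set.mem_iInter.mpr fun i => (hz i).1
    rcases hcov hzT with h | h
    · exact (hz (Classical.arbitrary ι)).2 (Set.mem_union_left _
        (hAu' ⟨hzT, fun hv2 => (Set.eq_empty_iff_forall_notMem.mp hempty z) ⟨hzT, h, hv2⟩⟩))
    · exact (hz (Classical.arbitrary ι)).2 (Set.mem_union_right _
        (hBv' ⟨hzT, fun hu2 => (Set.eq_empty_iff_forall_notMem.mp hempty z) ⟨hzT, hu2, h⟩⟩))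
  obtain ⟨i, hi⟩ := hFi
  have hx' : x ∈ u' := hAu' ⟨hxT, fun hv2 => (Set.eq_empty_iff_forall_notMem.mp hempty x) ⟨hxT, hxu, hv2⟩⟩
  have hy' : y ∈ v' := hBv' ⟨hyT, fun hu2 => (Set.eq_empty_iff_forall_notMem.mp hempty y) ⟨hyT, hu2, hyv⟩⟩
  have := (hconn i).isPreconnected u' v' hu' hv' hi
    ⟨x, (Set.iInter_subset F i) hxT, hx'⟩ ⟨y, (Set.iInter_subset F i) hyT, hy'⟩
  obtain ⟨z, _, hz2⟩ := this
  exact Set.disjoint_left.mp huv' hz2.1 hz2.2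


lemma sublevel_cpt (Q : Polynomial ℂ) (hQ : 1 ≤ Q.natDegree) (s : ℝ) :
    IsCompact {z : ℂ | ‖Q.eval z‖ ≤ s} := by
  have hcl : IsClosed {z : ℂ | ‖Q.eval z‖ ≤ s} := isClosed_le Q.continuous.norm continuous_const
  have hdeg : 0 < Q.degree := natDegree_pos_iff_degree_pos.mp hQ
  have htend : Tendsto (fun z : ℂ => ‖Q.eval z‖) (cocompact ℂ) atTop :=
    Q.tendsto_norm_atTop hdeg tendsto_norm_cocompact_atTop
  have hbd : IsBounded {z : ℂ | ‖Q.eval z‖ ≤ s} := by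
    have := htend.eventually_gt_atTop s
    rw [Filter.Eventually, mem_cocompact] at this
    obtain ⟨t, htc, hts⟩ := this
    refine htc.isBounded.subset fun z hz => ?_
    by_contra hzt
    exact absurd (Set.mem_setOf_eq ▸ hz) (not_le.mpr (hts hzt))
  exact Metric.isCompact_of_isClosed_isBounded hcl hbd

lemma escape_radius (P : Polynomial ℂ) (hd : 2 ≤ P.natDegree) :
    ∃ R : ℝ, 1 ≤ R ∧ ∀ z : ℂ, R ≤ ‖z‖ → 2 * ‖z‖ ≤ ‖P.eval z‖ := by
  set d := P.natDegree with hdd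
  have hP0 : P ≠ 0 := fun h => by simp [h] at hdd; omega
  set c := ‖P.leadingCoeff‖ with hc
  have hc0 : 0 < c := norm_pos_iff.mpr (leadingCoeff_ne_zero.mpr hP0)
  set A := ∑ i ∈ Finset.range d, ‖P.coeff i‖ with hA
  have hA0 : 0 ≤ A := Finset.sum_nonneg fun _ _ => norm_nonneg _
  refine ⟨max 1 ((A + 2) / c), le_max_left _ _, fun z hz => ?_⟩
  have hz1 : 1 ≤ ‖z‖ := le_trans (le_max_left _ _) hz
  have hz0 : 0 ≤ ‖z‖ := le_trans zero_le_one hz1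
  obtain ⟨k, hk⟩ : ∃ k, d = k + 1 := ⟨d - 1, by omega⟩
  have hk1 : 1 ≤ k := by omega
  -- eval expansion
  have heval : P.eval z = P.leadingCoeff * z ^ d + ∑ i ∈ Finset.range d, P.coeff i * z ^ i := by
    conv_lhs => rw [eval_eq_sum_range, Finset.sum_range_succ]
    rw [add_comm, leadingCoeff]
  have hrest : ‖∑ i ∈ Finset.range d, P.coeff i * z ^ i‖ ≤ A * ‖z‖ ^ k := by
    calc ‖∑ i ∈ Finset.range d, P.coeff i * z ^ i‖
        ≤ ∑ i ∈ Finset.range d, ‖P.coeff i * z ^ i‖ := norm_sum_le _ _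
      _ ≤ ∑ i ∈ Finset.range d, ‖P.coeff i‖ * ‖z‖ ^ k := by
          refine Finset.sum_le_sum fun i hi => ?_
          rw [norm_mul, norm_pow]
          exact mul_le_mul_of_nonneg_left
            (pow_le_pow_right₀ hz1 (by simp only [Finset.mem_range] at hi; omega)) (norm_nonneg _)
      _ = A * ‖z‖ ^ k := by rw [← Finset.sum_mul]
  have hlead : ‖P.leadingCoeff * z ^ d‖ = c * ‖z‖ ^ d := by rw [norm_mul, norm_pow]
  have h1 : c * ‖z‖ ^ d - A * ‖z‖ ^ k ≤ ‖P.eval z‖ := by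
    have := norm_sub_norm_le (P.leadingCoeff * z ^ d) (-(∑ i ∈ Finset.range d, P.coeff i * z ^ i))
    rw [sub_neg_eq_add, ← heval, norm_neg, hlead] at this
    linarith [hrest]
  have hcz : A + 2 ≤ c * ‖z‖ := by
    have := le_trans (le_max_right 1 ((A + 2) / c)) hz
    rw [div_le_iff₀ hc0] at this
    linarith
  have h2 : 2 * ‖z‖ ^ k ≤ c * ‖z‖ ^ d - A * ‖z‖ ^ k := by
    have hpowpos : (0:ℝ) ≤ ‖z‖ ^ k := pow_nonneg hz0 k
    have : c * ‖z‖ ^ d = (c * ‖z‖) * ‖z‖ ^ k := by rw [hk, pow_succ]; ring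
    rw [this]
    nlinarith [mul_le_mul_of_nonneg_right hcz hpowpos]
  have h3 : ‖z‖ ≤ ‖z‖ ^ k := le_self_pow₀ hz1 (by omega)
  linarith

set_option maxHeartbeats 2000000 in
lemma lemniscate_connected (Q : Polynomial ℂ) (hQ : 1 ≤ Q.natDegree) {r : ℝ} (hr : 0 ≤ r)
    (hcrit : ∀ z : ℂ, Q.derivative.eval z = 0 → ‖Q.eval z‖ ≤ r) :
    IsConnected {z : ℂ | ‖Q.eval z‖ ≤ r} := by
  have hdeg : 0 < Q.degree := natDegree_pos_iff_degree_pos.mp hQ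
  obtain ⟨z₀, hz₀⟩ := Complex.exists_root hdeg
  have hne : ({z : ℂ | ‖Q.eval z‖ ≤ r}).Nonempty :=
    ⟨z₀, by simp [IsRoot.def.mp hz₀, hr]⟩
  refine ⟨hne, ?_⟩
  -- sublevel sets
  set S : ℝ → Set ℂ := fun s => {z : ℂ | ‖Q.eval z‖ ≤ s} with hSdef
  have hSmono : ∀ {s t : ℝ}, s ≤ t → S s ⊆ S t := fun hst z hz => le_trans hz hst
  have hScpt : ∀ s, IsCompact (S s) := fun s => sublevel_cpt Q hQ s
  intro u v hu hv hcov ⟨a, haS, hau⟩ ⟨b, hbS, hbv⟩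
  by_contra hempty
  rw [Set.not_nonempty_iff_eq_empty] at hempty
  -- components
  set C : ℝ → Set ℂ := fun s => connectedComponentIn (S s) a with hCdef
  have haSs : ∀ {s : ℝ}, r ≤ s → a ∈ S s := fun hs => hSmono hs haS
  have haC : ∀ {s : ℝ}, r ≤ s → a ∈ C s := fun hs => mem_connectedComponentIn (haSs hs)
  have hCS : ∀ s, C s ⊆ S s := fun s => connectedComponentIn_subset _ _
  have hCpre : ∀ s, IsPreconnected (C s) := fun s => isPreconnected_connectedComponentIn
  have hCcl : ∀ s, r ≤ s → IsClosed (C s) := by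
    intro s hs
    have h1 : closure (C s) ⊆ C s :=
      IsPreconnected.subset_connectedComponentIn (hCpre s).closure
        (subset_closure (haC hs))
        (closure_minimal (hCS s) (hScpt s).isClosed)
    exact isClosed_of_closure_subset h1
  have hCmono : ∀ {s t : ℝ}, r ≤ s → s ≤ t → C s ⊆ C t := fun hs hst =>
    IsPreconnected.subset_connectedComponentIn (hCpre _) (haC hs)
      ((hCS _).trans (hSmono hst))
  -- the set of merging levels
  set M : Set ℝ := {s : ℝ | r ≤ s ∧ b ∈ C s} with hMdef
  have hMne : M.Nonempty := by
    set ρ := max ‖a‖ ‖b‖ with hρ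
    obtain ⟨zm, hzm, hzmax⟩ := (isCompact_closedBall (0:ℂ) ρ).exists_isMaxOn
      ⟨0, mem_closedBall_self (le_trans (norm_nonneg a) (le_max_left _ _))⟩
      (Q.continuous.norm.continuousOn)
    set s₀ := max r ‖Q.eval zm‖ with hs₀
    have hball : closedBall (0:ℂ) ρ ⊆ S s₀ := fun z hz =>
      show ‖Q.eval z‖ ≤ s₀ from le_trans (hzmax hz) (le_max_right _ _)
    have hbbin : b ∈ connectedComponentIn (S s₀) a := by
      refine IsPreconnected.subset_connectedComponentIn
        (convex_closedBall (0:ℂ) ρ).isPreconnected ?_ hball ?_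
      · exact mem_closedBall_zero_iff.mpr (le_max_left _ _)
      · exact mem_closedBall_zero_iff.mpr (le_max_right _ _)
    exact ⟨s₀, le_max_left _ _, hbbin⟩
  have hMbdd : BddBelow M := ⟨r, fun s hs => hs.1⟩
  set sx := sInf M with hsx
  have hrsx : r ≤ sx := le_csInf hMne fun s hs => hs.1
  have hbCgt : ∀ {s : ℝ}, sx < s → b ∈ C s := by
    intro s hs
    obtain ⟨t, htM, hts⟩ := exists_lt_of_csInf_lt hMne hs
    exact hCmono htM.1 (le_of_lt hts) htM.2
  -- b ∈ C sx
  have hbC : b ∈ C sx := by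
    have hTconn : IsConnected (⋂ s : {s : ℝ // sx < s}, C s.1) := by
      have : Nonempty {s : ℝ // sx < s} := ⟨⟨sx + 1, by linarith⟩⟩
      refine iInter_conn _ ?_ ?_ ?_
      · rintro ⟨s, hs⟩ ⟨t, ht⟩
        rcases le_total s t with h | h
        · exact ⟨⟨s, hs⟩, subset_rfl, hCmono (le_trans hrsx (le_of_lt hs)) h⟩
        · exact ⟨⟨t, ht⟩, hCmono (le_trans hrsx (le_of_lt ht)) h, subset_rfl⟩
      · intro s
        exact (hScpt s.1).of_isClosed_subset (hCcl s.1 (le_trans hrsx (le_of_lt s.2))) (hCS s.1)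
      · intro s
        exact ⟨⟨a, haC (le_trans hrsx (le_of_lt s.2))⟩, hCpre s.1⟩
    have hTsub : (⋂ s : {s : ℝ // sx < s}, C s.1) ⊆ S sx := by
      intro z hz
      simp only [Set.mem_iInter] at hz
      show ‖Q.eval z‖ ≤ sx
      by_contra hgt
      push_neg at hgt
      obtain ⟨t, ht1, ht2⟩ := exists_between hgt
      exact absurd (hCS t (hz ⟨t, ht1⟩)) (not_le.mpr ht2)
    have haT : a ∈ ⋂ s : {s : ℝ // sx < s}, C s.1 :=
      Set.mem_iInter.mpr fun s => haC (le_trans hrsx (le_of_lt s.2))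
    have hbT : b ∈ ⋂ s : {s : ℝ // sx < s}, C s.1 :=
      Set.mem_iInter.mpr fun s => hbCgt s.2
    exact IsPreconnected.subset_connectedComponentIn hTconn.isPreconnected haT hTsub hbT

  -- r < sx
  have hrlt : r < sx := by
    rcases lt_or_eq_of_le hrsx with h | h
    · exact h
    exfalso
    have hbCr : b ∈ C r := h ▸ hbC
    obtain ⟨z, hz1, hz2⟩ := (hCpre r) u v hu hv ((hCS r).trans hcov)
      ⟨a, haC le_rfl, hau⟩ ⟨b, hbCr, hbv⟩
    exact Set.eq_empty_iff_forall_notMem.mp hempty z ⟨hCS r hz1, hz2⟩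
  have hsx0 : 0 < sx := lt_of_le_of_lt hr hrlt
  -- open sublevel set and its component
  set O : Set ℂ := {z : ℂ | ‖Q.eval z‖ < sx} with hOdef
  have hOopen : IsOpen O := isOpen_lt Q.continuous.norm continuous_const
  have haO : a ∈ O := lt_of_le_of_lt haS hrlt
  set G : Set ℂ := connectedComponentIn O a with hGdef
  have hGopen : IsOpen G := hOopen.connectedComponentIn
  have hGconn : IsConnected G := isConnected_connectedComponentIn_iff.mpr haO
  have hGsub : G ⊆ O := connectedComponentIn_subset _ _
  have haG : a ∈ G := mem_connectedComponentIn haO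
  -- a point of O in the closure of G is in G
  have hOG : ∀ z ∈ O, z ∈ closure G → z ∈ G := by
    intro z hzO hzcl
    obtain ⟨ε, hε, hball⟩ := Metric.isOpen_iff.mp hOopen z hzO
    obtain ⟨g, hg1, hg2⟩ := _root_.mem_closure_iff.mp hzcl (ball z ε) isOpen_ball
      (mem_ball_self hε)
    have hpre : IsPreconnected (ball z ε ∪ G) :=
      IsPreconnected.union g hg1 hg2 (convex_ball z ε).isPreconnected hGconn.isPreconnected
    have hsub : ball z ε ∪ G ⊆ G :=
      IsPreconnected.subset_connectedComponentIn hpre (Set.mem_union_right _ haG)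
        (Set.union_subset hball hGsub)
    exact hsub (Set.mem_union_left _ (mem_ball_self hε))
  -- b is not in G
  have hbG : b ∉ G := by
    intro hbG
    have hpath : IsPathConnected G := hGopen.isConnected_iff_isPathConnected.mp hGconn
    have hjoin := hpath.joinedIn a haG b hbG
    set γ := hjoin.somePath with hγ
    have hrange : Set.range γ ⊆ G := by
      rintro _ ⟨t, rfl⟩; exact hjoin.somePath_mem t
    have hrcpt : IsCompact (Set.range γ) := isCompact_range γ.continuous
    have hrne : (Set.range γ).Nonempty := ⟨γ 0, Set.mem_range_self _⟩
    obtain ⟨w, hw, hwmax⟩ := hrcpt.exists_isMaxOn hrne Q.continuous.norm.continuousOn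
    set s' := max r ‖Q.eval w‖ with hs'
    have hs'lt : s' < sx := max_lt hrlt (hGsub (hrange hw))
    have hrsub : Set.range γ ⊆ S s' := fun z hz =>
      show ‖Q.eval z‖ ≤ s' from le_trans (hwmax hz) (le_max_right _ _)
    have hbC' : b ∈ C s' := by
      refine IsPreconnected.subset_connectedComponentIn ?_ ?_ hrsub ?_
      · exact (isConnected_range γ.continuous).isPreconnected
      · exact ⟨0, γ.source⟩
      · exact ⟨1, γ.target⟩
    exact absurd (csInf_le hMbdd ⟨le_max_left _ _, hbC'⟩) (not_le.mpr hs'lt)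
  set E : Set ℂ := closure G with hEdef
  have hbE : b ∉ E := fun h => hbG (hOG b (lt_of_le_of_lt hbS hrlt) h)
  have haE : a ∈ E := subset_closure haG
  -- key openness property
  have key : ∀ z₁ ∈ E ∩ S sx, ∃ N : Set ℂ, IsOpen N ∧ z₁ ∈ N ∧ N ∩ S sx ⊆ E := by
    intro z₁ ⟨hz₁E, hz₁S⟩
    rcases lt_or_eq_of_le (show ‖Q.eval z₁‖ ≤ sx from hz₁S) with hlt | heq
    · exact ⟨G, hGopen, hOG z₁ hlt hz₁E, fun z hz => subset_closure (hz.1 : z ∈ G)⟩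
    · -- boundary case: Q' z₁ ≠ 0
      have hQ' : Q.derivative.eval z₁ ≠ 0 := by
        intro h
        exact absurd (heq ▸ hcrit z₁ h) (not_le.mpr hrlt)
      have hsd : HasStrictDerivAt (fun z => Q.eval z) (Q.derivative.eval z₁) z₁ :=
        Q.hasStrictDerivAt z₁
      obtain ⟨φ, hφcoe, hz₁src⟩ : ∃ e : OpenPartialHomeomorph ℂ ℂ,
          (⇑e = fun z => Q.eval z) ∧ z₁ ∈ e.source :=
        ⟨HasStrictFDerivAt.toOpenPartialHomeomorph _ (hsd.hasStrictFDerivAt_equiv hQ'), rfl,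
          HasStrictFDerivAt.mem_toOpenPartialHomeomorph_source (hsd.hasStrictFDerivAt_equiv hQ')⟩
      set w₀ := Q.eval z₁ with hw₀
      have hw₀tgt : w₀ ∈ φ.target := by
        have := φ.map_source hz₁src
        rwa [hφcoe] at this
      obtain ⟨δ, hδ, hδsub⟩ := Metric.isOpen_iff.mp φ.open_target w₀ hw₀tgt
      set Nbig := φ.source ∩ (fun z => Q.eval z) ⁻¹' (ball w₀ δ) with hNbig
      have hNbigOpen : IsOpen Nbig := φ.open_source.inter (isOpen_ball.preimage Q.continuous)
      have hz₁Nbig : z₁ ∈ Nbig := by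
        refine ⟨hz₁src, ?_⟩
        rw [Set.mem_preimage, ← hw₀]
        exact mem_ball_self hδ
      -- Nbig ∩ O is preconnected
      have himg : Nbig ∩ O = φ.symm '' (ball w₀ δ ∩ ball (0:ℂ) sx) := by
        rw [φ.symm_image_eq_source_inter_preimage ((Set.inter_subset_left).trans hδsub)]
        ext z
        simp only [hNbig, Set.mem_inter_iff, Set.mem_preimage, mem_ball_zero_iff,
          Set.mem_setOf_eq, hOdef, hφcoe, Set.mem_inter_iff]
        tauto
      have hNOpre : IsPreconnected (Nbig ∩ O) := by
        rw [himg]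
        exact IsPreconnected.image ((convex_ball w₀ δ).inter (convex_ball 0 sx)).isPreconnected
          _ (φ.symm.continuousOn.mono ((Set.inter_subset_left).trans hδsub))
      -- Nbig ∩ O ⊆ G
      have hNOG : Nbig ∩ O ⊆ G := by
        obtain ⟨g, hgN, hgG⟩ := _root_.mem_closure_iff.mp hz₁E Nbig hNbigOpen hz₁Nbig
        have hgNO : g ∈ Nbig ∩ O := ⟨hgN, hGsub hgG⟩
        have hpre : IsPreconnected ((Nbig ∩ O) ∪ G) :=
          IsPreconnected.union g hgNO hgG hNOpre hGconn.isPreconnected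
        have : (Nbig ∩ O) ∪ G ⊆ G :=
          IsPreconnected.subset_connectedComponentIn hpre (Set.mem_union_right _ haG)
            (Set.union_subset (Set.inter_subset_right) hGsub)
        exact fun z hz => this (Set.mem_union_left _ hz)
      refine ⟨φ.source ∩ (fun z => Q.eval z) ⁻¹' (ball w₀ (δ/2)),
        φ.open_source.inter (isOpen_ball.preimage Q.continuous),
        ⟨hz₁src, by rw [Set.mem_preimage, ← hw₀]; exact mem_ball_self (by linarith)⟩, ?_⟩
      rintro z ⟨⟨hzsrc, hzball'⟩, hzS⟩
      rw [Set.mem_preimage] at hzball'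
      have hzball : Q.eval z ∈ ball w₀ (δ/2) := hzball'
      rcases lt_or_eq_of_le (show ‖Q.eval z‖ ≤ sx from hzS) with hzlt | hzeq
      · refine subset_closure (hNOG ⟨⟨hzsrc, ?_⟩, hzlt⟩)
        rw [Set.mem_preimage]
        exact ball_subset_ball (by linarith) hzball
      · -- z on the boundary: approximate from inside
        set w := Q.eval z with hwdef
        have hwball : w ∈ ball w₀ (δ/2) := hwdef ▸ hzball
        have hwtgt : w ∈ φ.target := hδsub (ball_subset_ball (by linarith) hwball)
        -- sequence wₙ = (1 - 1/(n+1)) • w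
        set wn : ℕ → ℂ := fun n => ((1 - 1/(n+1) : ℝ) : ℂ) * w with hwn
        have htend0 : Tendsto (fun n : ℕ => (1 - 1/(n+1) : ℝ)) atTop (nhds 1) := by
          have := tendsto_one_div_add_atTop_nhds_zero_nat (𝕜 := ℝ)
          have h2 := (tendsto_const_nhds (x := (1:ℝ)) (f := (atTop : Filter ℕ))).sub this
          simpa using h2
        have hwtend : Tendsto wn atTop (nhds w) := by
          have h1 : Tendsto (fun n : ℕ => ((1 - 1/(n+1) : ℝ) : ℂ)) atTop (nhds ((1:ℝ):ℂ)) :=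
            (Complex.continuous_ofReal.tendsto _).comp htend0
          have h2 := h1.mul (tendsto_const_nhds (x := w) (f := (atTop : Filter ℕ)))
          rw [hwn]
          convert h2 using 2
          simp
        have habs : ∀ n : ℕ, |(1 - 1/(n+1) : ℝ)| < 1 := by
          intro n
          have h1 : (0:ℝ) < 1/(n+1) := by positivity
          have h2 : (1:ℝ)/(n+1) ≤ 1 := by
            rw [div_le_one (by positivity)]
            have := Nat.cast_nonneg (α := ℝ) n
            linarith
          rw [abs_of_nonneg (by linarith)]
          linarith
        have hwnlt : ∀ n, ‖wn n‖ < sx := by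
          intro n
          rw [hwn]
          simp only [norm_mul, Complex.norm_real, Real.norm_eq_abs]
          calc |(1 - 1/(n+1) : ℝ)| * ‖w‖ ≤ |(1 - 1/(n+1) : ℝ)| * sx := by
                refine mul_le_mul_of_nonneg_left ?_ (abs_nonneg _)
                rw [← hzeq]
            _ < 1 * sx := mul_lt_mul_of_pos_right (habs n) hsx0
            _ = sx := one_mul sx
        have hwev : ∀ᶠ n in atTop, wn n ∈ ball w₀ δ := by
          have : ball w₀ δ ∈ nhds w := isOpen_ball.mem_nhds (ball_subset_ball (by linarith) hwball)
          exact hwtend.eventually_mem this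
        -- zₙ = φ.symm (wₙ) → z, and eventually in Nbig ∩ O ⊆ G
        have hzsymm : φ.symm w = z := by
          have := φ.left_inv hzsrc
          rw [hφcoe] at this
          rw [hwdef]; exact this
        have hsymm_cont : ContinuousAt φ.symm w := φ.symm.continuousAt
          (by rw [OpenPartialHomeomorph.symm_source]; exact hwtgt)
        have hztend : Tendsto (fun n => φ.symm (wn n)) atTop (nhds z) := by
          rw [← hzsymm]
          exact hsymm_cont.tendsto.comp hwtend
        have hev : ∀ᶠ n in atTop, φ.symm (wn n) ∈ G := by
          filter_upwards [hwev] with n hn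
          have hwn_tgt : wn n ∈ φ.target := hδsub hn
          have h1 : φ.symm (wn n) ∈ φ.source := φ.map_target hwn_tgt
          have h2 : Q.eval (φ.symm (wn n)) = wn n := by
            have := φ.right_inv hwn_tgt
            rw [hφcoe] at this; exact this
          refine hNOG ⟨⟨h1, ?_⟩, ?_⟩
          · rw [Set.mem_preimage, h2]; exact hn
          · show ‖Q.eval (φ.symm (wn n))‖ < sx
            rw [h2]; exact hwnlt n
        exact mem_closure_of_tendsto hztend hev
  -- build the open set W and conclude
  choose! N hNopen hNmem hNsub using key
  set W := ⋃ z₁ ∈ E ∩ S sx, N z₁ with hW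
  have hWopen : IsOpen W := isOpen_biUnion fun z₁ hz₁ => hNopen z₁ hz₁
  have hWsub : W ∩ S sx ⊆ E := by
    rintro z ⟨hzW, hzS⟩
    simp only [hW, Set.mem_iUnion] at hzW
    obtain ⟨z₁, hz₁, hzN⟩ := hzW
    exact hNsub z₁ hz₁ ⟨hzN, hzS⟩
  have hEW : E ∩ S sx ⊆ W := fun z hz =>
    Set.mem_biUnion hz (hNmem z hz)
  -- apply preconnectedness of C sx
  have haW : a ∈ W := hEW ⟨haE, haSs (le_of_lt hrlt)⟩
  obtain ⟨z, hzC, hzW, hzE⟩ := (hCpre sx) W Eᶜ hWopen (isClosed_closure.isOpen_compl)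
    (fun z hz => by
      by_cases h : z ∈ E
      · exact Set.mem_union_left _ (hEW ⟨h, hCS sx hz⟩)
      · exact Set.mem_union_right _ h)
    ⟨a, haC (le_of_lt hrlt), haW⟩ ⟨b, hbC, hbE⟩
  exact hzE (hWsub ⟨hzW, hCS sx hzC⟩)

/-- iterate of a polynomial as a polynomial -/
noncomputable def polyIter (P : Polynomial ℂ) : ℕ → Polynomial ℂ
  | 0 => X
  | n + 1 => (polyIter P n).comp P

lemma polyIter_eval (P : Polynomial ℂ) (n : ℕ) (z : ℂ) :
    (polyIter P n).eval z = (fun w => P.eval w)^[n] z := by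
  induction n generalizing z with
  | zero => simp [polyIter]
  | succ n ih =>
      rw [polyIter, eval_comp, ih (P.eval z), Function.iterate_succ_apply]

lemma polyIter_natDegree (P : Polynomial ℂ) (hd : 2 ≤ P.natDegree) (n : ℕ) :
    1 ≤ (polyIter P n).natDegree := by
  induction n with
  | zero => simp [polyIter]
  | succ n ih =>
      rw [polyIter, natDegree_comp]
      calc 1 ≤ (polyIter P n).natDegree * 2 := by omega
        _ ≤ (polyIter P n).natDegree * P.natDegree :=
          Nat.mul_le_mul_left _ hd

theorem stmt6 (P : Polynomial ℂ) (hd : 2 ≤ P.natDegree)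
    (K : Set ℂ)
    (hK : K = {z : ℂ | ∃ M : ℝ, ∀ n : ℕ, ‖(fun w => P.eval w)^[n] z‖ ≤ M})
    (hconn : ¬ IsConnected K) :
    ∃ z : ℂ, P.derivative.eval z = 0 ∧ z ∉ K := by
  by_contra hno
  push_neg at hno
  obtain ⟨R, hR1, hResc⟩ := escape_radius P hd
  have hR0 : 0 ≤ R := le_trans zero_le_one hR1
  -- points of K stay within R
  have hKmem : ∀ z ∈ K, ∀ n : ℕ, ‖(fun w => P.eval w)^[n] z‖ ≤ R := by
    intro z hz n
    by_contra h
    push_neg at h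
    set f : ℂ → ℂ := fun w => P.eval w with hf
    have hgrow : ∀ k : ℕ, R ≤ ‖f^[n + k] z‖ ∧ 2 ^ k * ‖f^[n] z‖ ≤ ‖f^[n + k] z‖ := by
      intro k
      induction k with
      | zero => exact ⟨le_of_lt h, by simp⟩
      | succ k ih =>
          have h1 : ‖f^[n + (k+1)] z‖ = ‖P.eval (f^[n+k] z)‖ := by
            rw [show n + (k+1) = (n+k) + 1 by omega, Function.iterate_succ_apply']
          have h2 : 2 * ‖f^[n+k] z‖ ≤ ‖P.eval (f^[n+k] z)‖ := hResc _ ih.1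
          constructor
          · rw [h1]
            nlinarith [ih.1, ih.2, norm_nonneg (f^[n+k] z)]
          · rw [h1, pow_succ]
            calc 2 ^ k * 2 * ‖f^[n] z‖ = 2 * (2 ^ k * ‖f^[n] z‖) := by ring
              _ ≤ 2 * ‖f^[n+k] z‖ := by linarith [ih.2]
              _ ≤ ‖P.eval (f^[n+k] z)‖ := h2
    obtain ⟨M, hM⟩ : ∃ M : ℝ, ∀ m : ℕ, ‖f^[m] z‖ ≤ M := by
      rw [hK] at hz; exact hz
    have hfn : 0 < ‖f^[n] z‖ := lt_of_le_of_lt hR0 h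
    obtain ⟨k, hk⟩ := pow_unbounded_of_one_lt (M / ‖f^[n] z‖) (one_lt_two (α := ℝ))
    have : M < 2 ^ k * ‖f^[n] z‖ := by
      rw [div_lt_iff₀ hfn] at hk
      linarith
    exact absurd (hM (n + k)) (not_le.mpr (lt_of_lt_of_le this (hgrow k).2))
  -- K is backward invariant
  have hPK : ∀ z : ℂ, P.eval z ∈ K → z ∈ K := by
    intro z hz
    rw [hK] at hz ⊢
    obtain ⟨M, hM⟩ := hz
    refine ⟨max M ‖z‖, fun n => ?_⟩
    cases n with
    | zero => simpa using le_max_right M ‖z‖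
    | succ n =>
        rw [Function.iterate_succ_apply]
        exact le_trans (hM n) (le_max_left _ _)
  -- critical points of all iterates are in K
  have hcritK : ∀ n : ℕ, ∀ z : ℂ, (polyIter P n).derivative.eval z = 0 → z ∈ K := by
    intro n
    induction n with
    | zero =>
        intro z hz
        rw [polyIter, derivative_X, eval_one] at hz
        exact absurd hz one_ne_zero
    | succ n ih =>
        intro z hz
        rw [polyIter, derivative_comp, eval_mul, eval_comp] at hz
        rcases mul_eq_zero.mp hz with h | h
        · exact hno z h
        · exact hPK z (ih (P.eval z) h)
  -- the lemniscates
  set S : ℕ → Set ℂ := fun n => {z : ℂ | ‖(polyIter P n).eval z‖ ≤ R} with hS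
  have hKS : ∀ n, K ⊆ S n := by
    intro n z hz
    show ‖(polyIter P n).eval z‖ ≤ R
    rw [polyIter_eval]
    exact hKmem z hz n
  have hSconn : ∀ n, IsConnected (S n) := fun n =>
    lemniscate_connected (polyIter P n) (polyIter_natDegree P hd n) hR0
      (fun z hz => hKS n (hcritK n z hz))
  have hScpt : ∀ n, IsCompact (S n) := fun n =>
    sublevel_cpt (polyIter P n) (polyIter_natDegree P hd n) R
  have hSanti : ∀ n, S (n + 1) ⊆ S n := by
    intro n z hz
    show ‖(polyIter P n).eval z‖ ≤ R
    rw [polyIter_eval]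
    by_contra h
    push_neg at h
    have h1 : ‖(fun w => P.eval w)^[n+1] z‖ ≤ R := by
      rw [← polyIter_eval]; exact hz
    rw [Function.iterate_succ_apply'] at h1
    have h2 := hResc _ (le_of_lt h)
    nlinarith [norm_nonneg ((fun w => P.eval w)^[n] z)]
  have hSmono : ∀ {m n : ℕ}, m ≤ n → S n ⊆ S m := by
    intro m n h
    induction n with
    | zero => rw [Nat.le_zero.mp h]
    | succ n ih =>
        rcases Nat.lt_or_ge m (n+1) with h' | h'
        · exact (hSanti n).trans (ih (by omega))
        · rw [show m = n + 1 by omega]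
  have hKeq : K = ⋂ n, S n := by
    apply Set.Subset.antisymm
    · exact Set.subset_iInter hKS
    · intro z hz
      rw [hK]
      refine ⟨R, fun n => ?_⟩
      have := Set.mem_iInter.mp hz n
      rw [← polyIter_eval P n z]
      exact this
  apply hconn
  rw [hKeq]
  exact iInter_conn S (fun m n => ⟨max m n, hSmono (le_max_left _ _), hSmono (le_max_right _ _)⟩)
    hScpt hSconn
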